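/- For odd n = 2t+1, the maximal size of a code X ⊆ 𝒜^n that is closed under reverse complementation, contains no self reverse complementary word, and whose distinct codewords pairwise share no common stem, is exactly 16. -/

import Mathlib

inductive DNA : Type
  | A | C | G | T
deriving DecidableEq, Inhabited

instance : Fintype DNA where
  elems := {DNA.A, DNA.C, DNA.G, DNA.T}
  complete := fun x => by cases x <;> decide

/-- Watson-Crick complement: A↔T, C↔G. -/
def DNA.compl : DNA → DNA
  | .A => .T
  | .T => .A
  | .C => .G
  | .G => .C

/-- Reverse complement of a DNA word. -/
def revComp {n : ℕ} (x : Fin n → DNA) : Fin n → DNA :=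
  fun i => (x i.rev).compl

/-- The i-th term s_i^w(x,y) of the additive stem w-similarity. -/
def stemTerm (w : DNA → DNA → ℝ) {n : ℕ} (x y : Fin n → DNA) (i : ℕ) : ℝ :=
  if h : i + 1 < n then
    if x ⟨i, by omega⟩ = y ⟨i, by omega⟩ ∧ x ⟨i + 1, h⟩ = y ⟨i + 1, h⟩ then
      w (x ⟨i, by omega⟩) (x ⟨i + 1, h⟩)
    else 0
  else 0

/-- Additive stem w-similarity S_w(x,y). -/
def stemSim (w : DNA → DNA → ℝ) {n : ℕ} (x y : Fin n → DNA) : ℝ :=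
  ∑ i ∈ Finset.range (n - 1), stemTerm w x y i

/-- Additive stem w-distance D_w(x,y) = S_w(x,x) - S_w(x,y). -/
def stemDist (w : DNA → DNA → ℝ) {n : ℕ} (x y : Fin n → DNA) : ℝ :=
  stemSim w x x - stemSim w x y

/-- x and y share a common stem at some position i ∈ [n-1]. -/
def commonStem {n : ℕ} (x y : Fin n → DNA) : Prop :=
  ∃ i : ℕ, ∃ h : i + 1 < n,
    x ⟨i, by omega⟩ = y ⟨i, by omega⟩ ∧ x ⟨i + 1, h⟩ = y ⟨i + 1, h⟩

/-- Alternating word x(a,b): a in odd positions, b in even positions (1-based). -/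
def alt (n : ℕ) (a b : DNA) : Fin n → DNA :=
  fun i => if i.val % 2 = 0 then a else b

lemma DNA.compl_ne (d : DNA) : d.compl ≠ d := by cases d <;> simp [DNA.compl]

lemma revComp_alt {t : ℕ} (a b : DNA) :
    revComp (alt (2 * t + 1) a b) = alt (2 * t + 1) a.compl b.compl := by
  funext i
  have hi : i.val < 2 * t + 1 := i.isLt
  simp only [revComp, alt, Fin.rev]
  by_cases h : i.val % 2 = 0
  · rw [if_pos h, if_pos (by simp; omega)]
  · rw [if_neg h, if_neg (by simp; omega)]

lemma alt_card {t : ℕ} (ht : 1 ≤ t) :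
    (Finset.image (fun p : DNA × DNA => alt (2 * t + 1) p.1 p.2) Finset.univ).card = 16 := by
  rw [Finset.card_image_of_injective _ ?_, Finset.card_univ]
  · rfl
  · intro p q hpq
    have h0 : alt (2 * t + 1) p.1 p.2 ⟨0, by omega⟩ = alt (2 * t + 1) q.1 q.2 ⟨0, by omega⟩ := by
      exact congrFun hpq _
    have h1 : alt (2 * t + 1) p.1 p.2 ⟨1, by omega⟩ = alt (2 * t + 1) q.1 q.2 ⟨1, by omega⟩ := by
      exact congrFun hpq _
    simp [alt] at h0 h1
    exact Prod.ext h0 h1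

/-- For odd n = 2t+1, the maximal size of a code closed under reverse
complementation, without self reverse complementary words, and whose distinct
codewords pairwise share no common stem, is exactly 16. -/
theorem stmt9 {t : ℕ} (ht : 1 ≤ t) :
    IsGreatest {N : ℕ | ∃ X : Finset (Fin (2 * t + 1) → DNA), X.card = N ∧
      (∀ x ∈ X, revComp x ∈ X) ∧ (∀ x ∈ X, revComp x ≠ x) ∧
      (∀ x ∈ X, ∀ y ∈ X, x ≠ y → ¬ commonStem x y)} 16 := by
  constructor
  · refine ⟨Finset.image (fun p : DNA × DNA => alt (2 * t + 1) p.1 p.2) Finset.univ,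
      alt_card ht, ?_, ?_, ?_⟩
    · intro x hx
      simp only [Finset.mem_image] at hx ⊢
      obtain ⟨⟨a, b⟩, -, rfl⟩ := hx
      exact ⟨(a.compl, b.compl), Finset.mem_univ _, (revComp_alt a b).symm⟩
    · intro x hx hrc
      simp only [Finset.mem_image] at hx
      obtain ⟨⟨a, b⟩, -, rfl⟩ := hx
      rw [revComp_alt] at hrc
      have := congrFun hrc ⟨0, by omega⟩
      simp [alt] at this
      exact DNA.compl_ne a this
    · intro x hx y hy hxy hcs
      simp only [Finset.mem_image] at hx hy
      obtain ⟨⟨a, b⟩, -, rfl⟩ := hx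
      obtain ⟨⟨c, d⟩, -, rfl⟩ := hy
      obtain ⟨i, h, h1, h2⟩ := hcs
      apply hxy
      simp only [alt] at h1 h2
      by_cases hp : i % 2 = 0
      · rw [if_pos hp, if_pos hp] at h1
        rw [if_neg (by omega), if_neg (by omega)] at h2
        rw [h1, h2]
      · rw [if_neg hp, if_neg hp] at h1
        rw [if_pos (by omega), if_pos (by omega)] at h2
        rw [h1, h2]
  · rintro N ⟨X, rfl, -, -, hstem⟩
    calc X.card ≤ Fintype.card (DNA × DNA) := by
          apply Finset.card_le_card_of_injOn
            (fun x => (x ⟨0, by omega⟩, x ⟨1, by omega⟩)) (fun _ _ => Finset.mem_univ _)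
          intro x hx y hy hxy
          by_contra hne
          exact hstem x hx y hy hne ⟨0, by omega, congrArg Prod.fst hxy,
            congrArg Prod.snd hxy⟩
      _ = 16 := rfl
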